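/- Let H be the group with nine generators h₁, h₃, h₄, h₅, h₆, h₇, h₈, h₉, h₁₀ and the following defining relations, where ⟨u,v⟩ = e denotes the braid relation u·v·u = v·u·v and [u,v] = e denotes u·v = v·u: (i) hⱼ² = e for all j ∈ {1,3,4,5,6,7,8,9,10}; (ii) braid relations ⟨h₄,h₉⟩ = ⟨h₁,h₄⟩ = ⟨h₁,h₃⟩ = ⟨h₃,h₄⟩ = ⟨h₃,h₆⟩ = ⟨h₃,h₅⟩ = ⟨h₅,h₆⟩ = ⟨h₅,h₈⟩ = ⟨h₅,h₇⟩ = ⟨h₈,h₇⟩ = ⟨h₇,h₁₀⟩ = e; (iii) commutation relations [h₉,h₁] = [h₉,h₃] = [h₉,h₅] = [h₉,h₆] = [h₉,h₇] = [h₉,h₈] = [h₉,h₁₀] = [h₁,h₅] = [h₁,h₆] = [h₁,h₇] = [h₁,h₈] = [h₁,h₁₀] = [h₃,h₇] = [h₃,h₈] = [h₃,h₁₀] = [h₄,h₅] = [h₄,h₆] = [h₄,h₇] = [h₄,h₈] = [h₄,h₁₀] = [h₆,h₇] = [h₆,h₈] = [h₆,h₁₀] = [h₅,h₁₀] = [h₈,h₁₀]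 = e; (iv) [h₁, h₄·h₃·h₄] = [h₆, h₃·h₅·h₃] = [h₈, h₅·h₇·h₅] = e. Then H is isomorphic to the symmetric group S₁₀ on ten letters (Equiv.Perm (Fin 10)). -/

import Mathlib

/- Theorem 3.3 of the paper in its simplified-presentation form: the group `G₁`
attached to the degenerated surface `R₅ ∪ R₅`, presented on the nine generators
`{1,3,4,5,6,7,8,9,10}` with the listed relations, is isomorphic to `S₁₀`. -/

namespace Stmt9

/-- The nine generators `h₁, h₃, h₄, h₅, h₆, h₇, h₈, h₉, h₁₀`. -/
inductive Gen : Type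
  | g1 | g3 | g4 | g5 | g6 | g7 | g8 | g9 | g10
  deriving DecidableEq

open Gen

/-- The generator as an element of the free group. -/
def h (g : Gen) : FreeGroup Gen := FreeGroup.of g

/-- Relator for the braid relation `⟨u,v⟩ = e`, i.e. `u·v·u = v·u·v`. -/
def braidR (u v : FreeGroup Gen) : FreeGroup Gen := u * v * u * (v * u * v)⁻¹

/-- Relator for the commutation relation `[u,v] = e`, i.e. `u·v = v·u`. -/
def commR (u v : FreeGroup Gen) : FreeGroup Gen := u * v * u⁻¹ * v⁻¹

/-- The defining relators (i)–(iv). -/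
def relList : List (FreeGroup Gen) :=
  [ -- (i) squares
    h g1 ^ 2, h g3 ^ 2, h g4 ^ 2, h g5 ^ 2, h g6 ^ 2, h g7 ^ 2, h g8 ^ 2,
    h g9 ^ 2, h g10 ^ 2,
    -- (ii) braid relations
    braidR (h g4) (h g9), braidR (h g1) (h g4), braidR (h g1) (h g3),
    braidR (h g3) (h g4), braidR (h g3) (h g6), braidR (h g3) (h g5),
    braidR (h g5) (h g6), braidR (h g5) (h g8), braidR (h g5) (h g7),
    braidR (h g8) (h g7), braidR (h g7) (h g10),
    -- (iii) commutation relations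
    commR (h g9) (h g1), commR (h g9) (h g3), commR (h g9) (h g5),
    commR (h g9) (h g6), commR (h g9) (h g7), commR (h g9) (h g8),
    commR (h g9) (h g10),
    commR (h g1) (h g5), commR (h g1) (h g6), commR (h g1) (h g7),
    commR (h g1) (h g8), commR (h g1) (h g10),
    commR (h g3) (h g7), commR (h g3) (h g8), commR (h g3) (h g10),
    commR (h g4) (h g5), commR (h g4) (h g6), commR (h g4) (h g7),
    commR (h g4) (h g8), commR (h g4) (h g10),
    commR (h g6) (h g7), commR (h g6) (h g8), commR (h g6) (h g10),
    commR (h g5) (h g10), commR (h g8) (h g10),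
    -- (iv)
    commR (h g1) (h g4 * h g3 * h g4), commR (h g6) (h g3 * h g5 * h g3),
    commR (h g8) (h g5 * h g7 * h g5) ]

/-- The full relator set. -/
def rels : Set (FreeGroup Gen) := {w | w ∈ relList}

end Stmt9



section S9Helpers
variable {G : Type*} [Group G]

lemma S9braid_of {a b : G} (h : a * b * a * (b * a * b)⁻¹ = 1) : a * b * a = b * a * b :=
  mul_inv_eq_one.mp h

lemma S9comm_of {a b : G} (h : a * b * a⁻¹ * b⁻¹ = 1) : a * b = b * a := by
  have h1 : a * b * a⁻¹ = b := mul_inv_eq_one.mp h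
  calc a * b = (a * b * a⁻¹) * a := by group
  _ = b * a := by rw [h1]

lemma S9cw {a : G} (ha : a * a = 1) : ∀ w : G, a * (a * w) = w := fun w => by
  rw [← mul_assoc, ha, one_mul]

lemma S9cs {a b : G} (h : a * b = b * a) : ∀ w : G, a * (b * w) = b * (a * w) := fun w => by
  rw [← mul_assoc, h, mul_assoc]

lemma S9ts {a b : G} (h : a * b * a = b * a * b) :
    ∀ w : G, a * (b * (a * w)) = b * (a * (b * w)) := fun w => by
  calc a * (b * (a * w)) = (a * b * a) * w := by group
  _ = (b * a * b) * w := by rw [h]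
  _ = b * (a * (b * w)) := by group

lemma S9ts0 {a b : G} (h : a * b * a = b * a * b) : a * (b * a) = b * (a * b) := by
  simpa only [mul_assoc] using h

lemma S9sq_conj {a c : G} (ha : a*a = 1) (hc : c*c = 1) : (a*c*a)*(a*c*a) = 1 := by
  simp only [mul_assoc, S9cw ha, S9cw hc, ha]

lemma S9cconj {w a c : G} (ha : w*a = a*w) (hc : w*c = c*w) : w * (a*c*a) = (a*c*a) * w := by
  simp only [mul_assoc]
  rw [S9cs ha, S9cs hc, ha]

lemma S9braid_pat1 {a c : G} (ha : a*a = 1) (hc : c*c = 1) (h : a*c*a = c*a*c) :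
    a*(a*c*a)*a = (a*c*a)*a*(a*c*a) := by
  simp only [mul_assoc, S9cw ha, ha, mul_one]
  rw [S9ts h]
  simp only [S9cw hc, ha, mul_one]

lemma S9braid_pat2 {a c d : G} (ha : a*a = 1) (had : a*d = d*a) (hcd : c*d*c = d*c*d) :
    (a*c*a)*d*(a*c*a) = d*(a*c*a)*d := by
  simp only [mul_assoc]
  rw [S9cs had, S9cw ha, S9ts hcd, S9cs had, had]

lemma S9pat_iv {a b c : G} (ha : a*a = 1) (hb : b*b = 1) (hab : a*b*a = b*a*b)
    (hiv : a*(b*c*b) = (b*c*b)*a) : b*(a*c*a) = (a*c*a)*b := by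
  have hivs : ∀ w : G, a*(b*(c*(b*w))) = b*(c*(b*(a*w))) := by
    intro w
    calc a*(b*(c*(b*w))) = (a*(b*c*b))*w := by group
    _ = ((b*c*b)*a)*w := by rw [hiv]
    _ = b*(c*(b*(a*w))) := by group
  have e1 : a*(b*(c*(b*(a*b)))) = b*(c*(b*b)) := by
    have := hivs (a*b); rwa [S9cw ha] at this
  have e2 : b*(a*(b*(c*(b*(a*b))))) = c := by
    rw [e1, S9cw hb, hb, mul_one]
  have e3 : a*(b*(a*(c*(a*(b*a))))) = c := by
    rw [S9ts hab, S9ts0 hab]; exact e2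
  have e4 : b*(a*(c*(a*b))) = a*(c*a) := by
    simpa only [mul_assoc, S9cw ha, ha, mul_one] using congrArg (fun x => a*(x*a)) e3
  have e5 := congrArg (fun x => x * b) e4
  simp only [mul_assoc, hb, mul_one] at e5
  simpa only [mul_assoc] using e5
end S9Helpers

namespace Stmt9
open Gen

def f : Gen → Equiv.Perm (Fin 10)
  | g9 => Equiv.swap 0 1
  | g4 => Equiv.swap 1 2
  | g1 => Equiv.swap 2 3
  | g3 => Equiv.swap 2 4
  | g6 => Equiv.swap 4 5
  | g5 => Equiv.swap 4 6
  | g8 => Equiv.swap 6 7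
  | g7 => Equiv.swap 6 8
  | g10 => Equiv.swap 8 9

theorem frels : ∀ r ∈ rels, FreeGroup.lift f r = 1 := by
  intro r hr
  simp only [rels, Set.mem_setOf_eq] at hr
  fin_cases hr <;>
    simp only [braidR, commR, Stmt9.h, map_mul, map_pow, map_inv, FreeGroup.lift_apply_of] <;> decide

abbrev G := PresentedGroup rels

noncomputable def phi : G →* Equiv.Perm (Fin 10) := PresentedGroup.toGroup frels

def X (g : Gen) : G := PresentedGroup.of g

lemma phiX (g : Gen) : phi (X g) = f g := PresentedGroup.toGroup.of frels

lemma relquot (r : FreeGroup Gen) (hr : r ∈ relList) : PresentedGroup.mk rels r = 1 :=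
  (QuotientGroup.eq_one_iff r).mpr (Subgroup.subset_normalClosure hr)

lemma hmk (g : Gen) : PresentedGroup.mk rels (h g) = X g := rfl


lemma sq1 : X g1 * X g1 = 1 := by
  rw [← pow_two, ← hmk, ← map_pow]; exact relquot (h g1 ^ 2) (by simp [relList])

lemma sq3 : X g3 * X g3 = 1 := by
  rw [← pow_two, ← hmk, ← map_pow]; exact relquot (h g3 ^ 2) (by simp [relList])

lemma sq4 : X g4 * X g4 = 1 := by
  rw [← pow_two, ← hmk, ← map_pow]; exact relquot (h g4 ^ 2) (by simp [relList])

lemma sq5 : X g5 * X g5 = 1 := by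
  rw [← pow_two, ← hmk, ← map_pow]; exact relquot (h g5 ^ 2) (by simp [relList])

lemma sq6 : X g6 * X g6 = 1 := by
  rw [← pow_two, ← hmk, ← map_pow]; exact relquot (h g6 ^ 2) (by simp [relList])

lemma sq7 : X g7 * X g7 = 1 := by
  rw [← pow_two, ← hmk, ← map_pow]; exact relquot (h g7 ^ 2) (by simp [relList])

lemma sq8 : X g8 * X g8 = 1 := by
  rw [← pow_two, ← hmk, ← map_pow]; exact relquot (h g8 ^ 2) (by simp [relList])

lemma sq9 : X g9 * X g9 = 1 := by
  rw [← pow_two, ← hmk, ← map_pow]; exact relquot (h g9 ^ 2) (by simp [relList])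

lemma sq10 : X g10 * X g10 = 1 := by
  rw [← pow_two, ← hmk, ← map_pow]; exact relquot (h g10 ^ 2) (by simp [relList])

lemma br4_9 : X g4 * X g9 * X g4 = X g9 * X g4 * X g9 :=
  S9braid_of (by
    simpa only [braidR, map_mul, map_inv, hmk] using relquot (braidR (h g4) (h g9)) (by simp [relList]))

lemma br1_4 : X g1 * X g4 * X g1 = X g4 * X g1 * X g4 :=
  S9braid_of (by
    simpa only [braidR, map_mul, map_inv, hmk] using relquot (braidR (h g1) (h g4)) (by simp [relList]))

lemma br1_3 : X g1 * X g3 * X g1 = X g3 * X g1 * X g3 :=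
  S9braid_of (by
    simpa only [braidR, map_mul, map_inv, hmk] using relquot (braidR (h g1) (h g3)) (by simp [relList]))

lemma br3_4 : X g3 * X g4 * X g3 = X g4 * X g3 * X g4 :=
  S9braid_of (by
    simpa only [braidR, map_mul, map_inv, hmk] using relquot (braidR (h g3) (h g4)) (by simp [relList]))

lemma br3_6 : X g3 * X g6 * X g3 = X g6 * X g3 * X g6 :=
  S9braid_of (by
    simpa only [braidR, map_mul, map_inv, hmk] using relquot (braidR (h g3) (h g6)) (by simp [relList]))

lemma br3_5 : X g3 * X g5 * X g3 = X g5 * X g3 * X g5 :=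
  S9braid_of (by
    simpa only [braidR, map_mul, map_inv, hmk] using relquot (braidR (h g3) (h g5)) (by simp [relList]))

lemma br5_6 : X g5 * X g6 * X g5 = X g6 * X g5 * X g6 :=
  S9braid_of (by
    simpa only [braidR, map_mul, map_inv, hmk] using relquot (braidR (h g5) (h g6)) (by simp [relList]))

lemma br5_8 : X g5 * X g8 * X g5 = X g8 * X g5 * X g8 :=
  S9braid_of (by
    simpa only [braidR, map_mul, map_inv, hmk] using relquot (braidR (h g5) (h g8)) (by simp [relList]))

lemma br5_7 : X g5 * X g7 * X g5 = X g7 * X g5 * X g7 :=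
  S9braid_of (by
    simpa only [braidR, map_mul, map_inv, hmk] using relquot (braidR (h g5) (h g7)) (by simp [relList]))

lemma br8_7 : X g8 * X g7 * X g8 = X g7 * X g8 * X g7 :=
  S9braid_of (by
    simpa only [braidR, map_mul, map_inv, hmk] using relquot (braidR (h g8) (h g7)) (by simp [relList]))

lemma br7_10 : X g7 * X g10 * X g7 = X g10 * X g7 * X g10 :=
  S9braid_of (by
    simpa only [braidR, map_mul, map_inv, hmk] using relquot (braidR (h g7) (h g10)) (by simp [relList]))

lemma cm9_1 : X g9 * X g1 = X g1 * X g9 :=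
  S9comm_of (by
    simpa only [commR, map_mul, map_inv, hmk] using relquot (commR (h g9) (h g1)) (by simp [relList]))

lemma cm9_3 : X g9 * X g3 = X g3 * X g9 :=
  S9comm_of (by
    simpa only [commR, map_mul, map_inv, hmk] using relquot (commR (h g9) (h g3)) (by simp [relList]))

lemma cm9_5 : X g9 * X g5 = X g5 * X g9 :=
  S9comm_of (by
    simpa only [commR, map_mul, map_inv, hmk] using relquot (commR (h g9) (h g5)) (by simp [relList]))

lemma cm9_6 : X g9 * X g6 = X g6 * X g9 :=
  S9comm_of (by
    simpa only [commR, map_mul, map_inv, hmk] using relquot (commR (h g9) (h g6)) (by simp [relList]))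

lemma cm9_7 : X g9 * X g7 = X g7 * X g9 :=
  S9comm_of (by
    simpa only [commR, map_mul, map_inv, hmk] using relquot (commR (h g9) (h g7)) (by simp [relList]))

lemma cm9_8 : X g9 * X g8 = X g8 * X g9 :=
  S9comm_of (by
    simpa only [commR, map_mul, map_inv, hmk] using relquot (commR (h g9) (h g8)) (by simp [relList]))

lemma cm9_10 : X g9 * X g10 = X g10 * X g9 :=
  S9comm_of (by
    simpa only [commR, map_mul, map_inv, hmk] using relquot (commR (h g9) (h g10)) (by simp [relList]))

lemma cm1_5 : X g1 * X g5 = X g5 * X g1 :=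
  S9comm_of (by
    simpa only [commR, map_mul, map_inv, hmk] using relquot (commR (h g1) (h g5)) (by simp [relList]))

lemma cm1_6 : X g1 * X g6 = X g6 * X g1 :=
  S9comm_of (by
    simpa only [commR, map_mul, map_inv, hmk] using relquot (commR (h g1) (h g6)) (by simp [relList]))

lemma cm1_7 : X g1 * X g7 = X g7 * X g1 :=
  S9comm_of (by
    simpa only [commR, map_mul, map_inv, hmk] using relquot (commR (h g1) (h g7)) (by simp [relList]))

lemma cm1_8 : X g1 * X g8 = X g8 * X g1 :=
  S9comm_of (by
    simpa only [commR, map_mul, map_inv, hmk] using relquot (commR (h g1) (h g8)) (by simp [relList]))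

lemma cm1_10 : X g1 * X g10 = X g10 * X g1 :=
  S9comm_of (by
    simpa only [commR, map_mul, map_inv, hmk] using relquot (commR (h g1) (h g10)) (by simp [relList]))

lemma cm3_7 : X g3 * X g7 = X g7 * X g3 :=
  S9comm_of (by
    simpa only [commR, map_mul, map_inv, hmk] using relquot (commR (h g3) (h g7)) (by simp [relList]))

lemma cm3_8 : X g3 * X g8 = X g8 * X g3 :=
  S9comm_of (by
    simpa only [commR, map_mul, map_inv, hmk] using relquot (commR (h g3) (h g8)) (by simp [relList]))

lemma cm3_10 : X g3 * X g10 = X g10 * X g3 :=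
  S9comm_of (by
    simpa only [commR, map_mul, map_inv, hmk] using relquot (commR (h g3) (h g10)) (by simp [relList]))

lemma cm4_5 : X g4 * X g5 = X g5 * X g4 :=
  S9comm_of (by
    simpa only [commR, map_mul, map_inv, hmk] using relquot (commR (h g4) (h g5)) (by simp [relList]))

lemma cm4_6 : X g4 * X g6 = X g6 * X g4 :=
  S9comm_of (by
    simpa only [commR, map_mul, map_inv, hmk] using relquot (commR (h g4) (h g6)) (by simp [relList]))

lemma cm4_7 : X g4 * X g7 = X g7 * X g4 :=
  S9comm_of (by
    simpa only [commR, map_mul, map_inv, hmk] using relquot (commR (h g4) (h g7)) (by simp [relList]))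

lemma cm4_8 : X g4 * X g8 = X g8 * X g4 :=
  S9comm_of (by
    simpa only [commR, map_mul, map_inv, hmk] using relquot (commR (h g4) (h g8)) (by simp [relList]))

lemma cm4_10 : X g4 * X g10 = X g10 * X g4 :=
  S9comm_of (by
    simpa only [commR, map_mul, map_inv, hmk] using relquot (commR (h g4) (h g10)) (by simp [relList]))

lemma cm6_7 : X g6 * X g7 = X g7 * X g6 :=
  S9comm_of (by
    simpa only [commR, map_mul, map_inv, hmk] using relquot (commR (h g6) (h g7)) (by simp [relList]))

lemma cm6_8 : X g6 * X g8 = X g8 * X g6 :=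
  S9comm_of (by
    simpa only [commR, map_mul, map_inv, hmk] using relquot (commR (h g6) (h g8)) (by simp [relList]))

lemma cm6_10 : X g6 * X g10 = X g10 * X g6 :=
  S9comm_of (by
    simpa only [commR, map_mul, map_inv, hmk] using relquot (commR (h g6) (h g10)) (by simp [relList]))

lemma cm5_10 : X g5 * X g10 = X g10 * X g5 :=
  S9comm_of (by
    simpa only [commR, map_mul, map_inv, hmk] using relquot (commR (h g5) (h g10)) (by simp [relList]))

lemma cm8_10 : X g8 * X g10 = X g10 * X g8 :=
  S9comm_of (by
    simpa only [commR, map_mul, map_inv, hmk] using relquot (commR (h g8) (h g10)) (by simp [relList]))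

lemma iv1 : X g1 * (X g4 * X g3 * X g4) = (X g4 * X g3 * X g4) * X g1 :=
  S9comm_of (by
    simpa only [commR, map_mul, map_inv, hmk] using relquot (commR (h g1) (h g4 * h g3 * h g4)) (by simp [relList]))

lemma iv6 : X g6 * (X g3 * X g5 * X g3) = (X g3 * X g5 * X g3) * X g6 :=
  S9comm_of (by
    simpa only [commR, map_mul, map_inv, hmk] using relquot (commR (h g6) (h g3 * h g5 * h g3)) (by simp [relList]))

lemma iv8 : X g8 * (X g5 * X g7 * X g5) = (X g5 * X g7 * X g5) * X g8 :=
  S9comm_of (by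
    simpa only [commR, map_mul, map_inv, hmk] using relquot (commR (h g8) (h g5 * h g7 * h g5)) (by simp [relList]))

end Stmt9
namespace Stmt9
open Gen

noncomputable def Y' : ℕ → G
  | 0 => X g9
  | 1 => X g4
  | 2 => X g1
  | 3 => X g1 * X g3 * X g1
  | 4 => X g6
  | 5 => X g6 * X g5 * X g6
  | 6 => X g8
  | 7 => X g8 * X g7 * X g8
  | 8 => X g10
  | _+9 => 1

lemma Yhigh : ∀ n, 9 ≤ n → Y' n = 1
  | _+9, _ => rfl

lemma sqY : ∀ n, Y' n * Y' n = 1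
  | 0 => sq9
  | 1 => sq4
  | 2 => sq1
  | 3 => S9sq_conj sq1 sq3
  | 4 => sq6
  | 5 => S9sq_conj sq6 sq5
  | 6 => sq8
  | 7 => S9sq_conj sq8 sq7
  | 8 => sq10
  | _+9 => one_mul 1

lemma braidY : ∀ n, n < 8 → Y' n * Y' (n+1) * Y' n = Y' (n+1) * Y' n * Y' (n+1)
  | 0, _ => br4_9.symm
  | 1, _ => br1_4.symm
  | 2, _ => S9braid_pat1 sq1 sq3 br1_3
  | 3, _ => S9braid_pat2 sq1 cm1_6 br3_6
  | 4, _ => S9braid_pat1 sq6 sq5 br5_6.symm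
  | 5, _ => S9braid_pat2 sq6 cm6_8 br5_8
  | 6, _ => S9braid_pat1 sq8 sq7 br8_7
  | 7, _ => S9braid_pat2 sq8 cm8_10 br7_10
  | n+8, h => absurd h (by omega)

lemma commY : ∀ i j, i + 2 ≤ j → Y' i * Y' j = Y' j * Y' i := by
  intro i j hij
  rcases Nat.lt_or_ge j 9 with hj | hj
  swap
  · rw [Yhigh j hj, mul_one, one_mul]
  · have hj2 : 2 ≤ j := by omega
    have hi2 : i ≤ j - 2 := by omega
    interval_cases j <;> interval_cases i
    exacts [
      -- j=2 : i=0
      cm9_1,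
      -- j=3 : i=0,1
      S9cconj cm9_1 cm9_3,
      S9pat_iv sq1 sq4 br1_4 iv1,
      -- j=4 : i=0,1,2
      cm9_6, cm4_6, cm1_6,
      -- j=5 : i=0..3
      S9cconj cm9_6 cm9_5,
      S9cconj cm4_6 cm4_5,
      S9cconj cm1_6 cm1_5,
      (S9cconj (S9cconj cm1_6 cm1_5).symm
        (S9pat_iv sq6 sq3 br3_6.symm iv6).symm).symm,
      -- j=6 : i=0..4
      cm9_8, cm4_8, cm1_8,
      (S9cconj cm1_8.symm cm3_8.symm).symm,
      cm6_8,
      -- j=7 : i=0..5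
      S9cconj cm9_8 cm9_7,
      S9cconj cm4_8 cm4_7,
      S9cconj cm1_8 cm1_7,
      (S9cconj (S9cconj cm1_8 cm1_7).symm (S9cconj cm3_8 cm3_7).symm).symm,
      S9cconj cm6_8 cm6_7,
      (S9cconj (S9cconj cm6_8 cm6_7).symm
        (S9pat_iv sq8 sq5 br5_8.symm iv8).symm).symm,
      -- j=8 : i=0..6
      cm9_10, cm4_10, cm1_10,
      (S9cconj cm1_10.symm cm3_10.symm).symm,
      cm6_10,
      (S9cconj cm6_10.symm cm5_10.symm).symm,
      cm8_10]

end Stmt9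

section S9Counting
variable {G : Type*} [Group G]

lemma S9counting {K : Type*} [Group K] {S : Set G}
    (hS : Subgroup.closure S = ⊤) (φ : G →* K) {C : Type*} [Finite C]
    (W : C → G) (hinj : Function.Injective (fun c => φ (W c)))
    (c₀ : C) (hc₀ : W c₀ = 1)
    (hstep : ∀ c : C, ∀ s ∈ S, ∃ c', W c * s = W c') :
    Function.Injective φ ∧ ∀ g : G, ∃ c, W c = g := by
  have key : ∀ g : G, ∀ c : C, ∃ c', W c * g = W c' := by
    intro g
    have hg : g ∈ Subgroup.closure S := by rw [hS]; trivial
    induction hg using Subgroup.closure_induction with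
    | mem s hs => exact fun c => hstep c s hs
    | one => exact fun c => ⟨c, mul_one _⟩
    | mul x y _ _ hx hy =>
      intro c
      obtain ⟨c1, h1⟩ := hx c
      obtain ⟨c2, h2⟩ := hy c1
      exact ⟨c2, by rw [← mul_assoc, h1, h2]⟩
    | inv x _ hx =>
      intro c
      -- the map c ↦ choice of c' with W c * x = W c' is injective, hence surjective
      choose F hF using hx
      have hFinj : Function.Injective F := by
        intro c1 c2 h12
        apply hinj
        have e1 := congrArg φ (hF c1)
        have e2 := congrArg φ (hF c2)
        rw [map_mul] at e1 e2
        rw [h12, ← e2] at e1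
        exact mul_right_cancel e1
      obtain ⟨c', hc'⟩ := (Finite.injective_iff_surjective.mp hFinj) c
      refine ⟨c', ?_⟩
      have := hF c'
      rw [hc'] at this
      rw [← this, mul_assoc, mul_inv_cancel, mul_one]
  have hrange : ∀ g : G, ∃ c, W c = g := by
    intro g
    obtain ⟨c, hc⟩ := key g c₀
    exact ⟨c, by rw [← hc, hc₀, one_mul]⟩
  refine ⟨?_, hrange⟩
  intro g1 g2 h12
  obtain ⟨c1, e1⟩ := hrange g1
  obtain ⟨c2, e2⟩ := hrange g2
  rw [← e1, ← e2] at h12 ⊢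
  rw [hinj h12]

end S9Counting

namespace Stmt9
open Gen

noncomputable def cw : ℕ → ℕ → G
  | k, j => if _ : j < k then cw k (j+1) * Y' j else 1
termination_by k j => k - j

lemma cw_lt {k j : ℕ} (h : j < k) : cw k j = cw k (j+1) * Y' j := by
  rw [cw]; simp [h]

lemma cw_ge {k j : ℕ} (h : k ≤ j) : cw k j = 1 := by
  rw [cw]; simp [Nat.not_lt.mpr h]

lemma cw_comm : ∀ d k j i, k ≤ j + d → i + 2 ≤ j → cw k j * Y' i = Y' i * cw k j := by
  intro d
  induction d with
  | zero => intro k j i hd _; rw [cw_ge (by omega), one_mul, mul_one]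
  | succ d IH =>
    intro k j i hd hij
    rcases Nat.lt_or_ge j k with hjk | hjk
    · rw [cw_lt hjk, mul_assoc, ← commY i j hij, ← mul_assoc,
        IH k (j+1) i (by omega) (by omega), mul_assoc]
    · rw [cw_ge hjk, one_mul, mul_one]

lemma cw_shuffle : ∀ d k j i, k ≤ j + d → j ≤ i → i + 2 ≤ k → k ≤ 9 →
    cw k j * Y' (i+1) = Y' i * cw k j := by
  intro d
  induction d with
  | zero => intro k j i hd hji hik _; omega
  | succ d IH =>
    intro k j i hd hji hik hk9
    rcases Nat.lt_or_ge j i with hji' | hji'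
    · -- j < i : commute Y' j past Y' (i+1)
      rw [cw_lt (by omega), mul_assoc, commY j (i+1) (by omega), ← mul_assoc,
        IH k (j+1) i (by omega) (by omega) hik hk9, mul_assoc]
    · -- j = i
      have hji'' : j = i := by omega
      subst hji''
      rw [cw_lt (by omega : j < k), cw_lt (by omega : j + 1 < k)]
      have hb : Y' (j+1) * Y' j * Y' (j+1) = Y' j * Y' (j+1) * Y' j := (braidY j (by omega)).symm
      calc cw k (j+1+1) * Y' (j+1) * Y' j * Y' (j+1)
          = cw k (j+2) * (Y' (j+1) * Y' j * Y' (j+1)) := by simp only [mul_assoc]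
        _ = cw k (j+2) * (Y' j * Y' (j+1) * Y' j) := by rw [hb]
        _ = (cw k (j+2) * Y' j) * (Y' (j+1) * Y' j) := by simp only [mul_assoc]
        _ = (Y' j * cw k (j+2)) * (Y' (j+1) * Y' j) := by
            rw [cw_comm (k) k (j+2) j (by omega) (by omega)]
        _ = Y' j * (cw k (j+1+1) * Y' (j+1) * Y' j) := by simp only [mul_assoc]

/-- Lehmer-code like index type: component `k` (for level `k+1`) lies in `[0, k+1]`. -/
def Code : Type := (k : Fin 9) → Fin (k.1 + 2)

instance : Fintype Code := by unfold Code; infer_instance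
noncomputable instance : DecidableEq Code := Classical.decEq _

def cv (c : Code) (m : ℕ) : ℕ := if h : m < 9 then (c ⟨m, h⟩).1 else 0

lemma cv_le {c : Code} {m : ℕ} (h : m < 9) : cv c m ≤ m + 1 := by
  simp only [cv, dif_pos h]
  exact Nat.lt_succ_iff.mp (c ⟨m, h⟩).2

noncomputable def Wpart : ℕ → Code → G
  | 0, _ => 1
  | m+1, c => Wpart m c * cw (m+1) (cv c m)

lemma Wpart_congr : ∀ m (c c' : Code), (∀ k : Fin 9, k.1 < m → c k = c' k) →
    Wpart m c = Wpart m c' := by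
  intro m
  induction m with
  | zero => intro _ _ _; rfl
  | succ m IH =>
    intro c c' hcc
    show Wpart m c * cw (m+1) (cv c m) = Wpart m c' * cw (m+1) (cv c' m)
    have h1 : cv c m = cv c' m := by
      by_cases h : m < 9
      · simp only [cv, dif_pos h]
        rw [hcc ⟨m, h⟩ (Nat.lt_succ_self m)]
      · simp only [cv, dif_neg h]
    rw [h1, IH c c' (fun k hk => hcc k (by omega))]

lemma step : ∀ m, m ≤ 9 → ∀ c : Code, ∀ i, i < m →
    ∃ c' : Code, (∀ k : Fin 9, m ≤ k.1 → c' k = c k) ∧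
      Wpart m c * Y' i = Wpart m c' := by
  intro m
  induction m with
  | zero => intro _ _ i hi; omega
  | succ m IH =>
    intro hm c i hi
    have hm9 : m < 9 := by omega
    have hjle : cv c m ≤ m + 1 := cv_le hm9
    set j := cv c m with hj
    have hWc : Wpart (m+1) c = Wpart m c * cw (m+1) j := rfl
    -- update helper
    have hupd : ∀ (v : ℕ) (hv : v < m + 2),
        (∀ k : Fin 9, m + 1 ≤ k.1 → (Function.update c ⟨m, hm9⟩ ⟨v, hv⟩) k = c k) ∧
        Wpart m (Function.update c ⟨m, hm9⟩ ⟨v, hv⟩) = Wpart m c ∧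
        cv (Function.update c ⟨m, hm9⟩ ⟨v, hv⟩) m = v := by
      intro v hv
      refine ⟨?_, ?_, ?_⟩
      · intro k hk
        apply Function.update_of_ne
        intro hkm
        rw [hkm] at hk
        simp only [Fin.val_mk] at hk
        omega
      · apply Wpart_congr
        intro k hk
        apply Function.update_of_ne
        intro hkm
        rw [hkm] at hk
        simp only [Fin.val_mk] at hk
        omega
      · simp only [cv, dif_pos hm9, Function.update_self]
        simp [Function.update]
    rcases Nat.lt_or_ge i j with hij | hij
    · rcases Nat.lt_or_ge (i+1) j with hij2 | hij2
      · -- i + 2 ≤ j : commute and recurse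
        obtain ⟨c'', hag, heq⟩ := IH (by omega) c i (by omega)
        refine ⟨c'', fun k hk => hag k (by omega), ?_⟩
        have hcv : cv c'' m = j := by
          have h5 := hag ⟨m, hm9⟩ (by simp)
          rw [hj]
          simp only [cv, dif_pos hm9, h5]
        show Wpart m c * cw (m+1) j * Y' i = Wpart m c'' * cw (m+1) (cv c'' m)
        rw [hcv, mul_assoc, cw_comm (m+1) (m+1) j i (by omega) (by omega), ← mul_assoc, heq]
      · -- i + 1 = j : extend the block
        have hij3 : i + 1 = j := by omega
        have hiv : i < m + 2 := by omega
        obtain ⟨hag, hWp, hcv⟩ := hupd i hiv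
        refine ⟨_, hag, ?_⟩
        show Wpart m c * cw (m+1) j * Y' i = Wpart m _ * cw (m+1) (cv _ m)
        rw [hcv, hWp, mul_assoc, ← hij3, ← cw_lt (show i < m+1 by omega)]
    · rcases Nat.lt_or_ge i j with hij2 | hij2
      · omega
      · rcases Nat.eq_or_lt_of_le hij2 with hij3 | hij3
        · -- i = j : shrink the block
          have hiv : j + 1 < m + 2 := by omega
          obtain ⟨hag, hWp, hcv⟩ := hupd (j+1) hiv
          refine ⟨_, hag, ?_⟩
          show Wpart m c * cw (m+1) j * Y' i = Wpart m _ * cw (m+1) (cv _ m)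
          rw [hcv, hWp, cw_lt (show j < m+1 by omega), ← hij3]
          simp only [mul_assoc]
          rw [sqY, mul_one]
        · -- j + 1 ≤ i : shuffle down and recurse
          obtain ⟨i0, rfl⟩ : ∃ i0, i = i0 + 1 := ⟨i - 1, by omega⟩
          obtain ⟨c'', hag, heq⟩ := IH (by omega) c i0 (by omega)
          refine ⟨c'', fun k hk => hag k (by omega), ?_⟩
          have hcv : cv c'' m = j := by
            have h5 := hag ⟨m, hm9⟩ (by simp)
            rw [hj]
            simp only [cv, dif_pos hm9, h5]
          show Wpart m c * cw (m+1) j * Y' (i0+1) = Wpart m c'' * cw (m+1) (cv c'' m)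
          rw [hcv, mul_assoc,
            cw_shuffle (m+1) (m+1) j i0 (by omega) (by omega) (by omega) (by omega),
            ← mul_assoc, heq]

end Stmt9

namespace Stmt9
open Gen

def t' (n : ℕ) : Equiv.Perm (Fin 10) :=
  if h : n < 9 then Equiv.swap ⟨n, by omega⟩ ⟨n+1, by omega⟩ else 1

lemma phiY : ∀ n, phi (Y' n) = t' n
  | 0 => by simp only [Y', map_mul, phiX]; rfl
  | 1 => by simp only [Y', map_mul, phiX]; rfl
  | 2 => by simp only [Y', map_mul, phiX]; rfl
  | 3 => by simp only [Y', map_mul, phiX]; decide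
  | 4 => by simp only [Y', map_mul, phiX]; rfl
  | 5 => by simp only [Y', map_mul, phiX]; decide
  | 6 => by simp only [Y', map_mul, phiX]; rfl
  | 7 => by simp only [Y', map_mul, phiX]; decide
  | 8 => by simp only [Y', map_mul, phiX]; rfl
  | n+9 => by
      show phi 1 = t' (n+9)
      rw [map_one, t', dif_neg (by omega)]

lemma t'_fix {n : ℕ} (p : Fin 10) (h1 : p.1 ≠ n) (h2 : p.1 ≠ n+1) : t' n p = p := by
  unfold t'
  split
  · apply Equiv.swap_apply_of_ne_of_ne
    · exact fun h => h1 (by rw [h])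
    · exact fun h => h2 (by rw [h])
  · rfl

lemma t'_map {n : ℕ} (hn : n < 9) (p : Fin 10) (h : p.1 = n) : (t' n p).1 = n + 1 := by
  unfold t'
  rw [dif_pos hn]
  have hp : p = ⟨n, by omega⟩ := Fin.ext h
  rw [hp, Equiv.swap_apply_left]

lemma Dfix : ∀ d k j, k ≤ j + d → ∀ p : Fin 10, (p.1 < j ∨ k < p.1) →
    phi (cw k j) p = p := by
  intro d
  induction d with
  | zero => intro k j hd p _; rw [cw_ge (by omega), map_one, Equiv.Perm.one_apply]
  | succ d IH =>
    intro k j hd p hp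
    rcases Nat.lt_or_ge j k with hjk | hjk
    · rw [cw_lt hjk, map_mul, Equiv.Perm.mul_apply, phiY]
      have ht : t' j p = p := t'_fix p (by omega) (by omega)
      rw [ht]
      exact IH k (j+1) (by omega) p (by omega)
    · rw [cw_ge hjk, map_one, Equiv.Perm.one_apply]

lemma Dmap : ∀ d k j, k ≤ j + d → j ≤ k → k ≤ 9 → ∀ p : Fin 10, p.1 = j →
    (phi (cw k j) p).1 = k := by
  intro d
  induction d with
  | zero =>
    intro k j hd hjk _ p hp
    rw [cw_ge (by omega), map_one, Equiv.Perm.one_apply]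
    omega
  | succ d IH =>
    intro k j hd hjk hk9 p hp
    rcases Nat.lt_or_ge j k with hjk' | hjk'
    · rw [cw_lt hjk', map_mul, Equiv.Perm.mul_apply, phiY]
      exact IH k (j+1) (by omega) (by omega) hk9 _ (t'_map (by omega) p hp)
    · rw [cw_ge hjk', map_one, Equiv.Perm.one_apply]
      omega

lemma Wfix : ∀ m, m ≤ 9 → ∀ c : Code, ∀ p : Fin 10, m < p.1 →
    phi (Wpart m c) p = p := by
  intro m
  induction m with
  | zero =>
    intro _ c p _
    show phi (Wpart 0 c) p = p
    rw [show (Wpart 0 c : G) = 1 from rfl, map_one, Equiv.Perm.one_apply]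
  | succ m IH =>
    intro hm c p hp
    show phi (Wpart m c * cw (m+1) (cv c m)) p = p
    rw [map_mul, Equiv.Perm.mul_apply,
      Dfix (m+1) (m+1) (cv c m) (by have := cv_le (show m < 9 by omega) (c := c); omega) p
        (by omega)]
    exact IH (by omega) c p (by omega)

lemma Wmap : ∀ m, m < 9 → ∀ c : Code, ∀ p : Fin 10, p.1 = cv c m →
    (phi (Wpart (m+1) c) p).1 = m + 1 := by
  intro m hm c p hp
  show (phi (Wpart m c * cw (m+1) (cv c m)) p).1 = m + 1
  rw [map_mul, Equiv.Perm.mul_apply]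
  have h1 : (phi (cw (m+1) (cv c m)) p).1 = m + 1 :=
    Dmap (m+1) (m+1) (cv c m) (by have := cv_le hm (c := c); omega)
      (by have := cv_le hm (c := c); omega) (by omega) p hp
  have h2 := Wfix m (by omega) c (phi (cw (m+1) (cv c m)) p) (by omega)
  rw [h2]
  exact h1

lemma inj_aux : ∀ m, m ≤ 9 → ∀ c c' : Code, (∀ k : Fin 9, m ≤ k.1 → c k = c' k) →
    phi (Wpart m c) = phi (Wpart m c') → c = c' := by
  intro m
  induction m with
  | zero => intro _ c c' hag _; funext k; exact hag k (Nat.zero_le _)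
  | succ m IH =>
    intro hm c c' hag heq
    have hm9 : m < 9 := by omega
    have hj : cv c m ≤ m + 1 := cv_le hm9
    have hj' : cv c' m ≤ m + 1 := cv_le hm9
    set p : Fin 10 := ⟨cv c m, by omega⟩ with hp
    set q : Fin 10 := ⟨cv c' m, by omega⟩ with hq
    have h1 : (phi (Wpart (m+1) c) p).1 = m + 1 := Wmap m hm9 c p rfl
    have h2 : (phi (Wpart (m+1) c') q).1 = m + 1 := Wmap m hm9 c' q rfl
    rw [heq] at h1
    have h3 : phi (Wpart (m+1) c') p = phi (Wpart (m+1) c') q :=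
      Fin.ext (by rw [h1, h2])
    have h4 : p = q := (phi (Wpart (m+1) c')).injective h3
    have h5 : cv c m = cv c' m := by
      have := congrArg Fin.val h4
      simpa using this
    have h6 : c ⟨m, hm9⟩ = c' ⟨m, hm9⟩ := by
      apply Fin.ext
      have e1 : ((c ⟨m, hm9⟩ : Fin (m+2)) : ℕ) = cv c m := by simp [cv, dif_pos hm9]
      have e2 : ((c' ⟨m, hm9⟩ : Fin (m+2)) : ℕ) = cv c' m := by simp [cv, dif_pos hm9]
      rw [e1, e2, h5]
    have h7 : phi (Wpart m c) = phi (Wpart m c') := by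
      have e : phi (Wpart m c) * phi (cw (m+1) (cv c m)) =
          phi (Wpart m c') * phi (cw (m+1) (cv c' m)) := by
        rw [← map_mul, ← map_mul]
        exact heq
      rw [h5] at e
      exact mul_right_cancel e
    apply IH (by omega) c c' _ h7
    intro k hk
    rcases Nat.eq_or_lt_of_le hk with hk' | hk'
    · have : k = ⟨m, hm9⟩ := Fin.ext hk'.symm
      rw [this]; exact h6
    · exact hag k (by omega)

end Stmt9

namespace Stmt9
open Gen

def Sgen : Set G := {g : G | ∃ n, n < 9 ∧ g = Y' n}

lemma hSgen : Subgroup.closure Sgen = ⊤ := by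
  rw [eq_top_iff, ← PresentedGroup.closure_range_of rels]
  rw [Subgroup.closure_le]
  rintro _ ⟨g, rfl⟩
  have mem : ∀ n, n < 9 → Y' n ∈ Subgroup.closure Sgen := fun n hn =>
    Subgroup.subset_closure ⟨n, hn, rfl⟩
  have hX : ∀ g : Gen, (PresentedGroup.of g : G) = X g := fun _ => rfl
  cases g with
  | g9 => exact mem 0 (by omega)
  | g4 => exact mem 1 (by omega)
  | g1 => exact mem 2 (by omega)
  | g6 => exact mem 4 (by omega)
  | g8 => exact mem 6 (by omega)
  | g10 => exact mem 8 (by omega)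
  | g3 =>
    have e : Y' 2 * Y' 3 * Y' 2 = X g3 := by
      show X g1 * (X g1 * X g3 * X g1) * X g1 = X g3
      simp only [mul_assoc, S9cw sq1, sq1, mul_one]
    rw [hX, ← e]
    exact Subgroup.mul_mem _ (Subgroup.mul_mem _ (mem 2 (by omega)) (mem 3 (by omega)))
      (mem 2 (by omega))
  | g5 =>
    have e : Y' 4 * Y' 5 * Y' 4 = X g5 := by
      show X g6 * (X g6 * X g5 * X g6) * X g6 = X g5
      simp only [mul_assoc, S9cw sq6, sq6, mul_one]
    rw [hX, ← e]
    exact Subgroup.mul_mem _ (Subgroup.mul_mem _ (mem 4 (by omega)) (mem 5 (by omega)))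
      (mem 4 (by omega))
  | g7 =>
    have e : Y' 6 * Y' 7 * Y' 6 = X g7 := by
      show X g8 * (X g8 * X g7 * X g8) * X g8 = X g7
      simp only [mul_assoc, S9cw sq8, sq8, mul_one]
    rw [hX, ← e]
    exact Subgroup.mul_mem _ (Subgroup.mul_mem _ (mem 6 (by omega)) (mem 7 (by omega)))
      (mem 6 (by omega))

noncomputable def Wfull : Code → G := fun c => Wpart 9 c

def c₀ : Code := fun k => ⟨k.1 + 1, by omega⟩

lemma Wc₀ : ∀ m, m ≤ 9 → Wpart m c₀ = 1 := by
  intro m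
  induction m with
  | zero => intro _; rfl
  | succ m IH =>
    intro hm
    show Wpart m c₀ * cw (m+1) (cv c₀ m) = 1
    have h1 : cv c₀ m = m + 1 := by simp [cv, c₀, (by omega : m < 9)]
    rw [h1, cw_ge (le_refl _), IH (by omega), mul_one]

lemma dinj : Function.Injective (fun c => phi (Wfull c)) := by
  intro c c' h
  exact inj_aux 9 (le_refl _) c c' (fun k hk => absurd (lt_of_lt_of_le k.2 hk) (lt_irrefl _)) h

lemma hcard : Fintype.card Code = Fintype.card (Equiv.Perm (Fin 10)) := by
  have h1 : Fintype.card Code = 3628800 := by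
    show Fintype.card ((k : Fin 9) → Fin (k.1 + 2)) = 3628800
    rw [Fintype.card_pi]
    decide
  have h2 : Fintype.card (Equiv.Perm (Fin 10)) = 3628800 := by
    rw [Fintype.card_perm, Fintype.card_fin]
    decide
  rw [h1, h2]

lemma hstep' : ∀ c : Code, ∀ s ∈ Sgen, ∃ c', Wfull c * s = Wfull c' := by
  rintro c s ⟨n, hn, rfl⟩
  obtain ⟨c', _, heq⟩ := step 9 (le_refl _) c n hn
  exact ⟨c', heq⟩

lemma phi_bij : Function.Bijective phi := by
  obtain ⟨hinj, hrange⟩ := S9counting hSgen phi Wfull dinj c₀ (Wc₀ 9 (le_refl _)) hstep'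
  refine ⟨hinj, ?_⟩
  have hd : Function.Bijective (fun c => phi (Wfull c)) :=
    (Fintype.bijective_iff_injective_and_card _).mpr ⟨dinj, hcard⟩
  intro σ
  obtain ⟨c, hc⟩ := hd.2 σ
  exact ⟨Wfull c, hc⟩

end Stmt9


/-- The simplified presentation of `G₁` for `R₅ ∪ R₅` is isomorphic to `S₁₀`. -/
theorem stmt9 : Nonempty (PresentedGroup Stmt9.rels ≃* Equiv.Perm (Fin 10)) :=
  ⟨MulEquiv.ofBijective Stmt9.phi Stmt9.phi_bij⟩
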